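/- In Twyst-off, if a is a positive integer and b > ⌈φ²a⌉ where φ = (1+√5)/2, then the position (a,b,a) is a P position. -/

import Mathlib

namespace TwystOff

/-- Contraction: merge the two neighbors of an interior zero stack; delete empty end stacks. -/
def contract : List ℕ → List ℕ
  | [] => []
  | a :: t =>
    if a = 0 then contract t
    else match t with
      | [] => [a]
      | [b] => if b = 0 then [a] else [a, b]
      | b :: c :: r => if b = 0 then contract ((a + c) :: r) else a :: contract (b :: c :: r)
termination_by l => l.length

theorem contract_sum (l : List ℕ) : (contract l).sum = l.sum := by
  induction l using contract.induct <;> rw [contract.eq_def] <;> simp_all <;> omega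

/-- A raw move: remove `k > 0` tiles from an end stack, or `k` tiles from each of two
consecutive stacks; the result is then contracted. -/
def premove (p q : List ℕ) : Prop :=
  (∃ a t k, p = a :: t ∧ 0 < k ∧ k ≤ a ∧ q = contract ((a - k) :: t)) ∨
  (∃ a t k, p = t ++ [a] ∧ 0 < k ∧ k ≤ a ∧ q = contract (t ++ [a - k])) ∨
  (∃ α a b β k, p = α ++ a :: b :: β ∧ 0 < k ∧ k ≤ a ∧ k ≤ b ∧
      q = contract (α ++ (a - k) :: (b - k) :: β))

/-- Moves of Twyst-off (positions are considered up to contraction). -/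
def Move (p q : List ℕ) : Prop := premove (contract p) q

theorem Move.sum_lt {p q : List ℕ} (h : Move p q) : q.sum < p.sum := by
  rw [← contract_sum p]
  rcases h with ⟨a, t, k, hp, hk, hka, hq⟩ | ⟨a, t, k, hp, hk, hka, hq⟩ |
    ⟨α, a, b, β, k, hp, hk, hka, hkb, hq⟩ <;>
    subst hq <;> rw [contract_sum, hp] <;> simp [List.sum_append] <;> omega

/-- P positions: every option is an N position (i.e. no option is itself P). -/
def PPos (p : List ℕ) : Prop := ∀ q, Move p q → ¬ PPos q
termination_by p.sum
decreasing_by exact Move.sum_lt (by assumption)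

/-- N positions: some option is a P position. -/
def NPos (p : List ℕ) : Prop := ∃ q, Move p q ∧ PPos q

end TwystOff


noncomputable def phi : ℝ := (1 + Real.sqrt 5) / 2
namespace TwystOff

lemma contract_nil : contract [] = [] := by rw [contract]
lemma contract_one {x : ℕ} (hx : 0 < x) : contract [x] = [x] := by
  rw [contract.eq_def]; simp [Nat.pos_iff_ne_zero.mp hx]
lemma contract_one' : contract [0] = [] := by rw [contract.eq_def]; simp [contract_nil]
lemma contract_two {x y : ℕ} (hx : 0 < x) (hy : 0 < y) : contract [x, y] = [x, y] := by
  rw [contract.eq_def]; simp [Nat.pos_iff_ne_zero.mp hx, Nat.pos_iff_ne_zero.mp hy]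
lemma contract_two_r {x : ℕ} (hx : 0 < x) : contract [x, 0] = [x] := by
  rw [contract.eq_def]; simp [Nat.pos_iff_ne_zero.mp hx]
lemma contract_two_l (y : ℕ) : contract [0, y] = contract [y] := by
  rw [contract.eq_def]; simp
lemma contract_three {x y z : ℕ} (hx : 0 < x) (hy : 0 < y) (hz : 0 < z) :
    contract [x, y, z] = [x, y, z] := by
  rw [contract.eq_def]
  simp [Nat.pos_iff_ne_zero.mp hx, Nat.pos_iff_ne_zero.mp hy, contract_two hy hz]
lemma contract_three_l {y z : ℕ} (hy : 0 < y) (hz : 0 < z) :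
    contract [0, y, z] = [y, z] := by
  rw [contract.eq_def]; simp [contract_two hy hz]
lemma contract_three_m {x z : ℕ} (hx : 0 < x) :
    contract [x, 0, z] = [x + z] := by
  rw [contract.eq_def]
  simp [Nat.pos_iff_ne_zero.mp hx, contract_one (by omega : 0 < x + z)]
lemma contract_three_r {x y : ℕ} (hx : 0 < x) (hy : 0 < y) :
    contract [x, y, 0] = [x, y] := by
  rw [contract.eq_def]
  simp [Nat.pos_iff_ne_zero.mp hx, Nat.pos_iff_ne_zero.mp hy, contract_two_r hy]

end TwystOff
namespace TwystOff

lemma move_of_left {p q : List ℕ} {x : ℕ} {t : List ℕ} (hc : contract p = x :: t) {k : ℕ}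
    (hk : 0 < k) (hkx : k ≤ x) (hq : q = contract ((x - k) :: t)) : Move p q :=
  Or.inl ⟨x, t, k, hc, hk, hkx, hq⟩

lemma move_of_right {p q : List ℕ} {x : ℕ} {t : List ℕ} (hc : contract p = t ++ [x]) {k : ℕ}
    (hk : 0 < k) (hkx : k ≤ x) (hq : q = contract (t ++ [x - k])) : Move p q :=
  Or.inr (Or.inl ⟨x, t, k, hc, hk, hkx, hq⟩)

lemma move_of_pair {p q : List ℕ} {x y : ℕ} {α β : List ℕ} (hc : contract p = α ++ x :: y :: β)
    {k : ℕ} (hk : 0 < k) (hkx : k ≤ x) (hky : k ≤ y)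
    (hq : q = contract (α ++ (x - k) :: (y - k) :: β)) : Move p q :=
  Or.inr (Or.inr ⟨α, x, y, β, k, hc, hk, hkx, hky, hq⟩)

lemma no_move_nil {q : List ℕ} : ¬ Move [] q := by
  rintro (⟨a, t, k, hp, _⟩ | ⟨a, t, k, hp, _⟩ | ⟨α, a, b, β, k, hp, _⟩) <;>
    rw [contract_nil] at hp <;> simp at hp

lemma PPos_nil : PPos [] := by
  rw [PPos]; exact fun q hq _ => no_move_nil hq

lemma move_elim2 {a b : ℕ} {q : List ℕ} (ha : 0 < a) (hb : 0 < b) (h : Move [a, b] q) :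
    (∃ k, 0 < k ∧ k ≤ a ∧ q = contract [a - k, b]) ∨
    (∃ k, 0 < k ∧ k ≤ b ∧ q = contract [a, b - k]) ∨
    (∃ k, 0 < k ∧ k ≤ a ∧ k ≤ b ∧ q = contract [a - k, b - k]) := by
  rw [Move, contract_two ha hb] at h
  rcases h with ⟨x, t, k, hp, hk, hkx, hq⟩ | ⟨x, t, k, hp, hk, hkx, hq⟩ |
    ⟨α, x, y, β, k, hp, hk, hkx, hky, hq⟩
  · simp at hp; obtain ⟨rfl, rfl⟩ := hp; exact Or.inl ⟨k, hk, hkx, hq⟩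
  · rcases t with _ | ⟨u, _ | ⟨v, t⟩⟩ <;> simp_all
    exact Or.inr (Or.inl ⟨k, hk, hkx, rfl⟩)
  · rcases α with _ | ⟨u, _ | ⟨v, t⟩⟩ <;> simp_all
    obtain ⟨rfl, rfl, rfl⟩ := hp
    exact Or.inr (Or.inr ⟨k, hk, hkx, hky, rfl⟩)

lemma move_elim1 {a : ℕ} {q : List ℕ} (ha : 0 < a) (h : Move [a] q) :
    ∃ k, 0 < k ∧ k ≤ a ∧ q = contract [a - k] := by
  rw [Move, contract_one ha] at h
  rcases h with ⟨x, t, k, hp, hk, hkx, hq⟩ | ⟨x, t, k, hp, hk, hkx, hq⟩ |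
    ⟨α, x, y, β, k, hp, hk, hkx, hky, hq⟩
  · simp at hp; obtain ⟨rfl, rfl⟩ := hp; exact ⟨k, hk, hkx, hq⟩
  · rcases t with _ | ⟨u, t⟩ <;> simp_all
    exact ⟨k, hk, hkx, rfl⟩
  · rcases α with _ | ⟨u, t⟩ <;> simp_all

lemma move_elim3 {a b c : ℕ} {q : List ℕ} (ha : 0 < a) (hb : 0 < b) (hc : 0 < c)
    (h : Move [a, b, c] q) :
    (∃ k, 0 < k ∧ k ≤ a ∧ q = contract [a - k, b, c]) ∨
    (∃ k, 0 < k ∧ k ≤ c ∧ q = contract [a, b, c - k]) ∨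
    (∃ k, 0 < k ∧ k ≤ a ∧ k ≤ b ∧ q = contract [a - k, b - k, c]) ∨
    (∃ k, 0 < k ∧ k ≤ b ∧ k ≤ c ∧ q = contract [a, b - k, c - k]) := by
  rw [Move, contract_three ha hb hc] at h
  rcases h with ⟨x, t, k, hp, hk, hkx, hq⟩ | ⟨x, t, k, hp, hk, hkx, hq⟩ |
    ⟨α, x, y, β, k, hp, hk, hkx, hky, hq⟩
  · simp at hp; obtain ⟨rfl, rfl⟩ := hp; exact Or.inl ⟨k, hk, hkx, hq⟩
  · rcases t with _ | ⟨u, _ | ⟨v, _ | ⟨w, t⟩⟩⟩ <;> simp_all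
    exact Or.inr (Or.inl ⟨k, hk, hkx, rfl⟩)
  · rcases α with _ | ⟨u, _ | ⟨v, _ | ⟨w, t⟩⟩⟩ <;> simp_all
    · obtain ⟨rfl, rfl, rfl⟩ := hp
      exact Or.inr (Or.inr (Or.inl ⟨k, hk, hkx, hky, rfl⟩))
    · obtain ⟨rfl, rfl, rfl, rfl⟩ := hp
      exact Or.inr (Or.inr (Or.inr ⟨k, hk, hkx, hky, rfl⟩))

end TwystOff
namespace TwystAux
open TwystOff
open scoped symmDiff

lemma phi_eq : phi = Real.goldenRatio := rfl
lemma one_lt_phi : 1 < phi := phi_eq ▸ Real.one_lt_goldenRatio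
lemma phi_lt_two : phi < 2 := phi_eq ▸ Real.goldenRatio_lt_two
lemma phi_sq : phi ^ 2 = phi + 1 := phi_eq ▸ Real.goldenRatio_sq
lemma phi_pos : 0 < phi := phi_eq ▸ Real.goldenRatio_pos

noncomputable def Anat (n : ℕ) : ℕ := (⌊(n : ℝ) * phi⌋).toNat
noncomputable def Bnat (n : ℕ) : ℕ := Anat n + n

lemma Anat_cast (n : ℕ) : (Anat n : ℤ) = ⌊(n : ℝ) * phi⌋ := by
  rw [Anat, Int.toNat_of_nonneg (Int.floor_nonneg.mpr (mul_nonneg (Nat.cast_nonneg n) phi_pos.le))]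

lemma Anat_bounds (n : ℕ) : (n : ℝ) * phi - 1 < Anat n ∧ (Anat n : ℝ) ≤ n * phi := by
  have h1 : ((Anat n : ℤ) : ℝ) = ((⌊(n : ℝ) * phi⌋ : ℤ) : ℝ) := by rw [Anat_cast]
  push_cast at h1
  constructor
  · nlinarith [Int.sub_one_lt_floor ((n : ℝ) * phi), h1]
  · nlinarith [Int.floor_le ((n : ℝ) * phi), h1]

lemma le_Anat (n : ℕ) : n ≤ Anat n := by
  have h := (Anat_bounds n).1
  have := one_lt_phi
  have : ((n : ℝ)) - 1 < Anat n := by nlinarith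
  have : (n : ℝ) < Anat n + 1 := by linarith
  exact_mod_cast Nat.lt_succ_iff.mp (by exact_mod_cast this)

lemma Anat_strictMono : StrictMono Anat := by
  intro m n hmn
  have hb1 := (Anat_bounds m).2
  have hb2 := (Anat_bounds n).1
  have h1 := one_lt_phi
  have hmn' : (m : ℝ) + 1 ≤ n := by exact_mod_cast hmn
  have : (Anat m : ℝ) < Anat n := by nlinarith
  exact_mod_cast this

lemma Bnat_cast (n : ℕ) : (Bnat n : ℤ) = ⌊(n : ℝ) * phi ^ 2⌋ := by
  have : (n : ℝ) * phi ^ 2 = (n : ℝ) * phi + (n : ℤ) := by push_cast [phi_sq]; ring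
  rw [Bnat, this, Int.floor_add_intCast]
  push_cast [Anat_cast]
  ring

lemma phi_conj : Real.HolderConjugate phi (phi ^ 2) := by
  rw [Real.holderConjugate_iff]
  constructor
  · exact one_lt_phi
  · have h := phi_sq
    have := phi_pos
    field_simp
    nlinarith

lemma phi_irr : Irrational phi := phi_eq ▸ Real.goldenRatio_irrational

-- cover and disjoint via Rayleigh
lemma beatty_symmDiff :
    {beattySeq phi k | k > 0} ∆ {beattySeq (phi ^ 2) k | k > 0} = {n : ℤ | 0 < n} :=
  phi_irr.beattySeq_symmDiff_beattySeq_pos phi_conj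

lemma cover (x : ℕ) (hx : 0 < x) : ∃ n, 0 < n ∧ (x = Anat n ∨ x = Bnat n) := by
  have hmem : (x : ℤ) ∈ ({n : ℤ | 0 < n}) := by simp only [Set.mem_setOf_eq]; exact_mod_cast hx
  rw [← beatty_symmDiff, Set.mem_symmDiff] at hmem
  have key : ∀ k : ℤ, 0 < k → ∀ r : ℝ, beattySeq r k = (x : ℤ) →
      ∃ n : ℕ, 0 < n ∧ (x : ℤ) = ⌊(n : ℝ) * r⌋ := by
    intro k hk r hkx
    refine ⟨k.toNat, by omega, ?_⟩
    rw [← hkx, beattySeq]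
    congr 2
    exact_mod_cast (Int.toNat_of_nonneg hk.le).symm
  rcases hmem with ⟨⟨k, hk, hkx⟩, -⟩ | ⟨⟨k, hk, hkx⟩, -⟩
  · obtain ⟨n, hn, h⟩ := key k hk _ hkx
    exact ⟨n, hn, Or.inl (by rw [← Anat_cast] at h; exact_mod_cast h)⟩
  · obtain ⟨n, hn, h⟩ := key k hk _ hkx
    exact ⟨n, hn, Or.inr (by rw [← Bnat_cast] at h; exact_mod_cast h)⟩

end TwystAux
namespace TwystAux
open TwystOff
open scoped symmDiff

lemma disjointAB {m n : ℕ} (hm : 0 < m) (hn : 0 < n) : Anat m ≠ Bnat n := by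
  intro h
  have hx : (0:ℤ) < (Anat m : ℤ) := by
    have := le_Anat m; omega
  have hmem : ((Anat m : ℤ)) ∈ ({n : ℤ | 0 < n}) := hx
  rw [← beatty_symmDiff, Set.mem_symmDiff] at hmem
  have h1 : (Anat m : ℤ) ∈ {x | ∃ k > 0, beattySeq phi k = x} := by
    refine ⟨(m : ℤ), by exact_mod_cast hm, ?_⟩
    rw [beattySeq]; push_cast; exact (by exact_mod_cast (Anat_cast m).symm)
  have h2 : (Anat m : ℤ) ∈ {x | ∃ k > 0, beattySeq (phi ^ 2) k = x} := by
    refine ⟨(n : ℤ), by exact_mod_cast hn, ?_⟩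
    rw [beattySeq]; push_cast; rw [h]; exact (by exact_mod_cast (Bnat_cast n).symm)
  rcases hmem with ⟨-, h'⟩ | ⟨-, h'⟩ <;> exact h' (by assumption)

lemma Anat_inj {m n : ℕ} (h : Anat m = Anat n) : m = n := Anat_strictMono.injective h

lemma Anat_pos {n : ℕ} (hn : 0 < n) : 0 < Anat n := lt_of_lt_of_le hn (le_Anat n)

def InW (x y : ℕ) : Prop := ∃ n, (x = Anat n ∧ y = Bnat n) ∨ (x = Bnat n ∧ y = Anat n)

lemma Anat_zero : Anat 0 = 0 := by
  have := (Anat_bounds 0).2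
  have : (Anat 0 : ℝ) ≤ 0 := by simpa using this
  exact_mod_cast le_antisymm (by exact_mod_cast this) (Nat.zero_le _)

-- helper: positivity forces index positivity
lemma index_pos {n x : ℕ} (hx : 0 < x) (h : x = Anat n ∨ x = Bnat n) : 0 < n := by
  rcases Nat.eq_zero_or_pos n with rfl | hn
  · rcases h with rfl | rfl <;> simp [Anat_zero, Bnat, Anat_zero] at hx
  · exact hn

lemma W1a {u n : ℕ} (hu : 0 < u) (hun : u < Anat n) (hn : 0 < n) : ¬ InW u (Bnat n) := by
  rintro ⟨m, ⟨rfl, hB⟩ | ⟨rfl, hA⟩⟩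
  · -- Bnat m = Bnat n → m = n → u = Anat n, contra
    have hm : 0 < m := index_pos hu (Or.inl rfl)
    have : Anat n + n = Anat m + m := hB
    have hmn : m = n := by
      rcases lt_trichotomy m n with h | h | h
      · have := Anat_strictMono h; omega
      · exact h
      · have := Anat_strictMono h; omega
    omega
  · -- Bnat m = u, Anat m = Bnat n: disjoint
    have hm : 0 < m := index_pos hu (Or.inr rfl)
    exact disjointAB hm hn hA.symm
lemma W1b {v n : ℕ} (hv : 0 < v) (hvn : v < Bnat n) (hn : 0 < n) : ¬ InW (Anat n) v := by
  rintro ⟨m, ⟨hA, rfl⟩ | ⟨hB, rfl⟩⟩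
  · have hmn : m = n := Anat_inj hA.symm
    subst hmn; omega
  · have hm : 0 < m := index_pos hv (Or.inl rfl)
    exact disjointAB hn hm hB
lemma W1c {k n : ℕ} (hk : 0 < k) (hkn : k < Anat n) (hn : 0 < n) :
    ¬ InW (Anat n - k) (Bnat n - k) := by
  have hAB : Anat n < Bnat n := by unfold Bnat; omega
  rintro ⟨m, ⟨hA, hB⟩ | ⟨hB, hA⟩⟩
  · -- Anat m = An - k, Bnat m = Bn - k ⇒ m = n (diff) ⇒ k = 0
    have h1 : Anat m + m = Bnat m := rfl
    have h2 : Anat n + n = Bnat n := rfl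
    have hm : m = n := by omega
    subst hm
    omega
  · -- Bnat m = An - k < Bn - k = Anat m, but Anat m ≤ Bnat m
    have h1 : Anat m ≤ Bnat m := by unfold Bnat; omega
    have h2 : Anat n + n = Bnat n := rfl
    omega
lemma W1a' {u n : ℕ} (hu : 0 < u) (hun : u < Bnat n) (hn : 0 < n) : ¬ InW u (Anat n) := by
  rintro ⟨m, ⟨rfl, hB⟩ | ⟨rfl, hA⟩⟩
  · have hm : 0 < m := index_pos hu (Or.inl rfl)
    exact disjointAB hn hm hB
  · have hmn : m = n := Anat_inj hA.symm
    subst hmn; omega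
lemma W1b' {v n : ℕ} (hv : 0 < v) (hvn : v < Anat n) (hn : 0 < n) : ¬ InW (Bnat n) v := by
  rintro ⟨m, ⟨hA, rfl⟩ | ⟨hB, rfl⟩⟩
  · have hm : 0 < m := index_pos hv (Or.inr rfl)
    exact disjointAB hm hn hA.symm
  · have hmn : m = n := by
      have h1 : Anat m + m = Bnat m := rfl
      have h2 : Anat n + n = Bnat n := rfl
      rcases lt_trichotomy m n with h | h | h
      · have := Anat_strictMono h; omega
      · exact h
      · have := Anat_strictMono h; omega
    subst hmn; omega
lemma W1c' {k n : ℕ} (hk : 0 < k) (hkn : k < Anat n) (hn : 0 < n) :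
    ¬ InW (Bnat n - k) (Anat n - k) := by
  have h2 : Anat n + n = Bnat n := rfl
  rintro ⟨m, ⟨hA, hB⟩ | ⟨hB, hA⟩⟩
  · have h1 : Anat m ≤ Bnat m := by unfold Bnat; omega
    omega
  · have h1 : Anat m + m = Bnat m := rfl
    have hm : m = n := by omega
    subst hm; omega

end TwystAux
namespace TwystAux
open TwystOff

lemma move_single_nil {u : ℕ} (hu : 0 < u) : Move [u] [] :=
  move_of_left (contract_one hu) hu le_rfl (by simp [contract_one', contract_nil])

def P2 (p : List ℕ) : Prop :=
  p = [] ∨ ∃ n, 0 < n ∧ (p = [Anat n, Bnat n] ∨ p = [Bnat n, Anat n])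

lemma contract_zero_zero : contract [0, 0] = [] := by
  rw [contract_two_l, contract_one']

lemma exists_response {x y : ℕ} (hx : 0 < x) (hy : 0 < y) (h : ¬ InW x y) :
    ∃ q', Move [x, y] q' ∧ P2 q' := by
  have hc2 := contract_two hx hy
  by_cases hxy : x ≤ y
  · obtain ⟨n, hn, rfl | rfl⟩ := cover x hx
    · -- x = Anat n
      set d := y - Anat n with hd
      rcases lt_trichotomy d n with hdn | hdn | hdn
      · -- pair move, k = Anat n - Anat d
        rcases Nat.eq_zero_or_pos d with hd0 | hd0
        · -- x = y, take all
          refine ⟨[], move_of_pair (α := []) (β := []) hc2 hx le_rfl (by omega) ?_, Or.inl rfl⟩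
          have hyx : y - Anat n = 0 := by omega
          simp only [List.nil_append]
          rw [Nat.sub_self, (by omega : y - Anat n = 0), contract_zero_zero]
        · have hAd : Anat d < Anat n := Anat_strictMono hdn
          have hAdp : 0 < Anat d := Anat_pos hd0
          refine ⟨[Anat d, Bnat d], move_of_pair (α := []) (β := []) hc2
            (k := Anat n - Anat d) (by omega) (by omega) (by omega) ?_, Or.inr ⟨d, hd0, Or.inl rfl⟩⟩
          simp only [List.nil_append]
          rw [(by omega : Anat n - (Anat n - Anat d) = Anat d),
            (by unfold Bnat; omega : y - (Anat n - Anat d) = Bnat d),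
            contract_two hAdp (by unfold Bnat; omega)]
      · exact absurd ⟨n, Or.inl ⟨rfl, by unfold Bnat; omega⟩⟩ h
      · -- y > Bnat n : right-end reduce y to Bnat n
        have hBn : Bnat n < y := by unfold Bnat; omega
        refine ⟨[Anat n, Bnat n], move_of_right (t := [Anat n]) hc2
          (k := y - Bnat n) (by omega) (by omega) ?_, Or.inr ⟨n, hn, Or.inl rfl⟩⟩
        have : y - (y - Bnat n) = Bnat n := by omega
        simp only [List.cons_append, List.nil_append]
        rw [this, contract_two (Anat_pos hn) (by unfold Bnat; omega)]
    · -- x = Bnat n : right-end reduce y to Anat n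
      have hAn : Anat n < y := by
        have : Anat n < Bnat n := by unfold Bnat; omega
        omega
      refine ⟨[Bnat n, Anat n], move_of_right (t := [Bnat n]) hc2
        (k := y - Anat n) (by omega) (by omega) ?_, Or.inr ⟨n, hn, Or.inr rfl⟩⟩
      have : y - (y - Anat n) = Anat n := by omega
      simp only [List.cons_append, List.nil_append]
      rw [this, contract_two (by omega) (Anat_pos hn)]
  · push_neg at hxy
    obtain ⟨n, hn, rfl | rfl⟩ := cover y hy
    · -- y = Anat n
      set d := x - Anat n with hd
      have hd0 : 0 < d := by omega
      rcases lt_trichotomy d n with hdn | hdn | hdn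
      · have hAd : Anat d < Anat n := Anat_strictMono hdn
        have hAdp : 0 < Anat d := Anat_pos hd0
        refine ⟨[Bnat d, Anat d], move_of_pair (α := []) (β := []) hc2
          (k := Anat n - Anat d) (by omega) (by omega) (by omega) ?_, Or.inr ⟨d, hd0, Or.inr rfl⟩⟩
        simp only [List.nil_append]
        rw [(by omega : Anat n - (Anat n - Anat d) = Anat d),
          (by unfold Bnat; omega : x - (Anat n - Anat d) = Bnat d),
          contract_two (by unfold Bnat; omega) hAdp]
      · exact absurd ⟨n, Or.inr ⟨by unfold Bnat; omega, rfl⟩⟩ h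
      · have hBn : Bnat n < x := by unfold Bnat; omega
        refine ⟨[Bnat n, Anat n], move_of_left hc2
          (k := x - Bnat n) (by omega) (by omega) ?_, Or.inr ⟨n, hn, Or.inr rfl⟩⟩
        rw [(by omega : x - (x - Bnat n) = Bnat n),
          contract_two (by unfold Bnat; omega) (Anat_pos hn)]
    · -- y = Bnat n : left-end reduce x to Anat n
      have hAn : Anat n < x := by
        have : Anat n < Bnat n := by unfold Bnat; omega
        omega
      refine ⟨[Anat n, Bnat n], move_of_left hc2
        (k := x - Anat n) (by omega) (by omega) ?_, Or.inr ⟨n, hn, Or.inl rfl⟩⟩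
      rw [(by omega : x - (x - Anat n) = Anat n),
        contract_two (Anat_pos hn) (by omega)]

end TwystAux
namespace TwystAux
open TwystOff

lemma Bnat_pos {n : ℕ} (hn : 0 < n) : 0 < Bnat n := by unfold Bnat; omega

lemma not_PPos_single {u : ℕ} (hu : 0 < u) : ¬ PPos [u] := by
  intro hP
  rw [PPos] at hP
  exact hP [] (move_single_nil hu) PPos_nil

theorem P2_PPos : ∀ p, P2 p → PPos p := by
  suffices H : ∀ N p, p.sum ≤ N → P2 p → PPos p by
    exact fun p hp => H p.sum p le_rfl hp
  intro N
  induction N with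
  | zero =>
    rintro p hs (rfl | ⟨n, hn, rfl | rfl⟩)
    · exact PPos_nil
    all_goals
      exfalso
      have := Anat_pos hn
      simp [List.sum_cons] at hs
      omega
  | succ N IH =>
    rintro p hs (rfl | ⟨n, hn, rfl | rfl⟩)
    · exact PPos_nil
    all_goals
      rw [PPos]
      intro q hq hPq
      have hqs := Move.sum_lt hq
      have hA1 : 0 < Anat n := Anat_pos hn
      have hB1 : 0 < Bnat n := Bnat_pos hn
      have hAB : Anat n < Bnat n := by unfold Bnat; omega
      have hBA : Anat n + n = Bnat n := rfl
      have hresp : ∀ u v : ℕ, 0 < u → 0 < v → ¬ InW u v → q = [u, v] → False := by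
        rintro u v hu hv hniw rfl
        obtain ⟨q', hmv, hP2⟩ := exists_response hu hv hniw
        have hq's := Move.sum_lt hmv
        rw [PPos] at hPq
        refine hPq q' hmv (IH q' ?_ hP2)
        simp only [List.sum_cons, List.sum_nil] at hs hqs hq's ⊢
        omega
    -- case p = [Anat n, Bnat n]
    · rcases move_elim2 hA1 hB1 hq with ⟨k, hk, hka, hqe⟩ | ⟨k, hk, hka, hqe⟩ |
        ⟨k, hk, hka, hkb, hqe⟩
      · rcases Nat.lt_or_ge k (Anat n) with hlt | hge
        · rw [contract_two (by omega) hB1] at hqe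
          exact hresp _ _ (by omega) hB1 (W1a (by omega) (by omega) hn) hqe
        · have hk' : k = Anat n := by omega
          subst hk'
          rw [Nat.sub_self, contract_two_l, contract_one hB1] at hqe
          exact not_PPos_single hB1 (hqe ▸ hPq)
      · rcases Nat.lt_or_ge k (Bnat n) with hlt | hge
        · rw [contract_two hA1 (by omega)] at hqe
          exact hresp _ _ hA1 (by omega) (W1b (by omega) (by omega) hn) hqe
        · have hk' : k = Bnat n := by omega
          subst hk'
          rw [Nat.sub_self, contract_two_r hA1] at hqe
          exact not_PPos_single hA1 (hqe ▸ hPq)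
      · rcases Nat.lt_or_ge k (Anat n) with hlt | hge
        · rw [contract_two (by omega) (by omega)] at hqe
          exact hresp _ _ (by omega) (by omega) (W1c hk hlt hn) hqe
        · have hk' : k = Anat n := by omega
          subst hk'
          rw [Nat.sub_self, contract_two_l, (by omega : Bnat n - Anat n = n),
            contract_one hn] at hqe
          exact not_PPos_single hn (hqe ▸ hPq)
    -- case p = [Bnat n, Anat n]
    · rcases move_elim2 hB1 hA1 hq with ⟨k, hk, hka, hqe⟩ | ⟨k, hk, hka, hqe⟩ |
        ⟨k, hk, hka, hkb, hqe⟩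
      · rcases Nat.lt_or_ge k (Bnat n) with hlt | hge
        · rw [contract_two (by omega) hA1] at hqe
          exact hresp _ _ (by omega) hA1 (W1a' (by omega) (by omega) hn) hqe
        · have hk' : k = Bnat n := by omega
          subst hk'
          rw [Nat.sub_self, contract_two_l, contract_one hA1] at hqe
          exact not_PPos_single hA1 (hqe ▸ hPq)
      · rcases Nat.lt_or_ge k (Anat n) with hlt | hge
        · rw [contract_two hB1 (by omega)] at hqe
          exact hresp _ _ hB1 (by omega) (W1b' (by omega) (by omega) hn) hqe
        · have hk' : k = Anat n := by omega
          subst hk'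
          rw [Nat.sub_self, contract_two_r hB1] at hqe
          exact not_PPos_single hB1 (hqe ▸ hPq)
      · rcases Nat.lt_or_ge k (Anat n) with hlt | hge
        · rw [contract_two (by omega) (by omega)] at hqe
          exact hresp _ _ (by omega) (by omega) (W1c' hk hlt hn) hqe
        · have hk' : k = Anat n := by omega
          subst hk'
          rw [(by omega : Bnat n - Anat n = n), Nat.sub_self, contract_two_r hn] at hqe
          exact not_PPos_single hn (hqe ▸ hPq)

end TwystAux
namespace TwystAux
open TwystOff

lemma partner_spec (a : ℕ) (ha : 0 < a) :
    ∃ n p, 0 < n ∧ 0 < p ∧ P2 [p, a] ∧ P2 [a, p] ∧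
      ((a = Anat n ∧ p = a + n ∧ n ≤ a) ∨ (p + n = a ∧ 0 < n)) := by
  obtain ⟨n, hn, rfl | rfl⟩ := cover a ha
  · exact ⟨n, Bnat n, hn, Bnat_pos hn, Or.inr ⟨n, hn, Or.inr rfl⟩,
      Or.inr ⟨n, hn, Or.inl rfl⟩, Or.inl ⟨rfl, rfl, le_Anat n⟩⟩
  · exact ⟨n, Anat n, hn, Anat_pos hn, Or.inr ⟨n, hn, Or.inl rfl⟩,
      Or.inr ⟨n, hn, Or.inr rfl⟩, Or.inr ⟨rfl, hn⟩⟩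

lemma bR {a b : ℕ} (hb : ⌈phi ^ 2 * (a : ℝ)⌉ < (b : ℤ)) : phi ^ 2 * (a : ℝ) + 1 ≤ b := by
  have h1 : (⌈phi ^ 2 * (a : ℝ)⌉ : ℤ) + 1 ≤ (b : ℤ) := by omega
  have h2 : phi ^ 2 * (a : ℝ) ≤ ⌈phi ^ 2 * (a : ℝ)⌉ := Int.le_ceil _
  have h3 : ((⌈phi ^ 2 * (a : ℝ)⌉ : ℤ) : ℝ) + 1 ≤ ((b : ℤ) : ℝ) := by exact_mod_cast h1
  push_cast at h3 ⊢
  linarith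

lemma two_lt_phi_sq : 2 < phi ^ 2 := by
  have := one_lt_phi; rw [phi_sq]; linarith

lemma b_gt_2a {a b : ℕ} (ha : 0 < a) (hb : ⌈phi ^ 2 * (a : ℝ)⌉ < (b : ℤ)) : 2 * a < b := by
  have h1 := bR hb
  have h2 := two_lt_phi_sq
  have ha' : (1 : ℝ) ≤ a := by exact_mod_cast ha
  have : (2 * a : ℝ) < b := by nlinarith
  exact_mod_cast this

lemma ceil_mono_sub {a b k : ℕ} (hb : ⌈phi ^ 2 * (a : ℝ)⌉ < (b : ℤ)) (hka : k ≤ a) :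
    ⌈phi ^ 2 * ((a - k : ℕ) : ℝ)⌉ < (b : ℤ) := by
  refine lt_of_le_of_lt (Int.ceil_le_ceil ?_) hb
  have h2 := two_lt_phi_sq
  have : ((a - k : ℕ) : ℝ) ≤ a := by
    have : (a - k : ℕ) ≤ a := by omega
    exact_mod_cast this
  nlinarith

lemma ceil_pair_move {a b k : ℕ} (hb : ⌈phi ^ 2 * (a : ℝ)⌉ < (b : ℤ)) (hk : 0 < k)
    (hka : k ≤ a) (hab : 2 * a < b) :
    ⌈phi ^ 2 * ((a - k : ℕ) : ℝ)⌉ < ((b - k - k : ℕ) : ℤ) := by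
  have h1 := bR hb
  have h2 := two_lt_phi_sq
  have hcast : ((a - k : ℕ) : ℝ) = (a : ℝ) - k := by
    push_cast [Nat.cast_sub hka]; ring
  have hcast2 : ((b - k - k : ℕ) : ℝ) = (b : ℝ) - 2 * k := by
    have : (b - k - k : ℕ) + 2 * k = b := by omega
    have := congrArg (fun x : ℕ => (x : ℝ)) this
    push_cast at this
    linarith
  have hk' : (1 : ℝ) ≤ k := by exact_mod_cast hk
  have hceil : (⌈phi ^ 2 * ((a - k : ℕ) : ℝ)⌉ : ℝ) < phi ^ 2 * ((a - k : ℕ) : ℝ) + 1 :=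
    Int.ceil_lt_add_one _
  have : (⌈phi ^ 2 * ((a - k : ℕ) : ℝ)⌉ : ℝ) < ((b - k - k : ℕ) : ℝ) := by
    rw [hcast] at hceil ⊢
    rw [hcast2]
    nlinarith
  exact_mod_cast this

lemma partner_lt {a b n : ℕ} (ha : 0 < a) (hb : ⌈phi ^ 2 * (a : ℝ)⌉ < (b : ℤ))
    (han : a = Anat n) : 2 * a + n < b := by
  have h1 := bR hb
  have h2 := (Anat_bounds n).1
  rw [← han] at h2
  have h3 := one_lt_phi
  have h4 := phi_lt_two
  have h5 := phi_sq
  have : (2 * a + n : ℝ) < b := by nlinarith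
  exact_mod_cast this

end TwystAux
namespace TwystAux
open TwystOff

theorem main_aux : ∀ a b : ℕ, 0 < a → ⌈phi ^ 2 * (a : ℝ)⌉ < (b : ℤ) → PPos [a, b, a] := by
  intro a
  induction a using Nat.strong_induction_on with
  | _ a IH =>
  intro b ha hb
  have hb2a : 2 * a < b := b_gt_2a ha hb
  have hb0 : 0 < b := by omega
  rw [PPos]
  intro q hq hPq
  obtain ⟨n, p, hn, hp, hP2l, hP2r, hcase⟩ := partner_spec a ha
  have hpb : p < b := by rcases hcase with ⟨-, rfl, hna⟩ | ⟨h, -⟩ <;> omega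
  have hresp_l : ∀ w : ℕ, p < w → q = [w, a] → False := by
    rintro w hpw rfl
    have hmv : Move [w, a] [p, a] := by
      refine move_of_left (contract_two (by omega) ha) (k := w - p) (by omega) (by omega) ?_
      rw [(by omega : w - (w - p) = p), contract_two hp ha]
    rw [PPos] at hPq
    exact hPq _ hmv (P2_PPos _ hP2l)
  have hresp_r : ∀ w : ℕ, p < w → q = [a, w] → False := by
    rintro w hpw rfl
    have hmv : Move [a, w] [a, p] := by
      refine move_of_right (t := [a]) (contract_two ha (by omega)) (k := w - p) (by omega)
        (by omega) ?_
      show [a, p] = contract ([a] ++ [w - (w - p)])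
      rw [(by omega : w - (w - p) = p)]
      exact (contract_two ha hp).symm
    rw [PPos] at hPq
    exact hPq _ hmv (P2_PPos _ hP2r)
  rcases move_elim3 ha hb0 ha hq with ⟨k, hk, hka, hqe⟩ | ⟨k, hk, hka, hqe⟩ |
    ⟨k, hk, hka, hkb, hqe⟩ | ⟨k, hk, hkb, hka, hqe⟩
  · -- left end
    rcases Nat.lt_or_ge k a with hlt | hge
    · rw [contract_three (by omega) hb0 ha] at hqe
      subst hqe
      have hmv : Move [a - k, b, a] [a - k, b, a - k] := by
        refine move_of_right (t := [a - k, b]) (contract_three (by omega) hb0 ha) (k := k)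
          hk hka ?_
        show [a - k, b, a - k] = contract [a - k, b, a - k]
        exact (contract_three (by omega) hb0 (by omega)).symm
      rw [PPos] at hPq
      exact hPq _ hmv (IH (a - k) (by omega) b (by omega) (ceil_mono_sub hb hka))
    · have hk' : k = a := by omega
      subst hk'
      rw [Nat.sub_self, contract_three_l hb0 ha] at hqe
      exact hresp_l b hpb hqe
  · -- right end
    rcases Nat.lt_or_ge k a with hlt | hge
    · rw [contract_three ha hb0 (by omega)] at hqe
      subst hqe
      have hmv : Move [a, b, a - k] [a - k, b, a - k] := by
        refine move_of_left (contract_three ha hb0 (by omega)) (k := k) hk hka ?_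
        exact (contract_three (by omega) hb0 (by omega)).symm
      rw [PPos] at hPq
      exact hPq _ hmv (IH (a - k) (by omega) b (by omega) (ceil_mono_sub hb hka))
    · have hk' : k = a := by omega
      subst hk'
      rw [Nat.sub_self, contract_three_r ha hb0] at hqe
      exact hresp_r b hpb hqe
  · -- left pair
    rcases Nat.lt_or_ge k a with hlt | hge
    · rw [contract_three (by omega) (by omega) ha] at hqe
      subst hqe
      have hmv : Move [a - k, b - k, a] [a - k, b - k - k, a - k] := by
        refine move_of_pair (α := [a - k]) (β := []) (x := b - k) (y := a)
          (contract_three (by omega) (by omega) ha) (k := k) hk (by omega) hka ?_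
        show [a - k, b - k - k, a - k] = contract [a - k, b - k - k, a - k]
        exact (contract_three (by omega) (by omega) (by omega)).symm
      rw [PPos] at hPq
      exact hPq _ hmv (IH (a - k) (by omega) (b - k - k) (by omega)
        (ceil_pair_move hb hk hka hb2a))
    · have hk' : k = a := by omega
      rw [(by omega : a - k = 0), contract_three_l (by omega) ha] at hqe
      have hpw : p < b - k := by
        rcases hcase with ⟨han, rfl, hna⟩ | ⟨h, -⟩
        · have := partner_lt ha hb han; omega
        · omega
      exact hresp_l (b - k) hpw hqe
  · -- right pair
    rcases Nat.lt_or_ge k a with hlt | hge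
    · rw [contract_three ha (by omega) (by omega)] at hqe
      subst hqe
      have hmv : Move [a, b - k, a - k] [a - k, b - k - k, a - k] := by
        refine move_of_pair (α := []) (β := [a - k]) (x := a) (y := b - k)
          (contract_three ha (by omega) (by omega)) (k := k) hk hka (by omega) ?_
        show [a - k, b - k - k, a - k] = contract [a - k, b - k - k, a - k]
        exact (contract_three (by omega) (by omega) (by omega)).symm
      rw [PPos] at hPq
      exact hPq _ hmv (IH (a - k) (by omega) (b - k - k) (by omega)
        (ceil_pair_move hb hk hka hb2a))
    · have hk' : k = a := by omega
      rw [(by omega : a - k = 0), contract_three_r ha (by omega)] at hqe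
      have hpw : p < b - k := by
        rcases hcase with ⟨han, rfl, hna⟩ | ⟨h, -⟩
        · have := partner_lt ha hb han; omega
        · omega
      exact hresp_r (b - k) hpw hqe

end TwystAux


theorem palindrome_P_of_large_b (a b : ℕ) (ha : 0 < a)
    (hb : ⌈phi ^ 2 * (a : ℝ)⌉ < (b : ℤ)) : TwystOff.PPos [a, b, a] := by
  exact TwystAux.main_aux a b ha hb
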